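/- Let A = (Q, q_I, δ, F) be a Büchi automaton over an alphabet A with Q finite, and let w, w′ : ℕ → A be infinite words. Suppose there are strictly monotone functions c, c′ : ℕ → ℕ with c 0 = 0 and c′ 0 = 0 such that for every n, writing u_n for the finite word w(c n) w(c n + 1) ⋯ w(c (n+1) − 1) and u′_n for w′(c′ n) ⋯ w′(c′ (n+1) − 1), the blocks u_n and u′_n induce the same state transformations: for all states p, q ∈ Q, (p →^{u_n} q ↔ p →^{u′_n} q) and (p ⇒^{u_n} q ↔ p ⇒^{u′_n} q). Then w is accepted by A if and only if w′ is accepted by A. -/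
import Mathlib

/-- `p →^{u} q`: the Büchi automaton with transition function `δ` has a run from `p`
to `q` processing the finite word `u`. -/
def BuchiReaches {Q A : Type*} (δ : Q → A → Set Q) (p : Q) (u : List A) (q : Q) : Prop :=
  ∃ r : ℕ → Q, r 0 = p ∧ r u.length = q ∧
    ∀ j (hj : j < u.length), r (j + 1) ∈ δ (r j) (u.get ⟨j, hj⟩)

/-- `p ⇒^{u} q`: as `BuchiReaches`, but the run additionally visits an accepting state. -/
def BuchiReachesAcc {Q A : Type*} (δ : Q → A → Set Q) (F : Set Q)
    (p : Q) (u : List A) (q : Q) : Prop :=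
  ∃ r : ℕ → Q, r 0 = p ∧ r u.length = q ∧
    (∀ j (hj : j < u.length), r (j + 1) ∈ δ (r j) (u.get ⟨j, hj⟩)) ∧
    ∃ j ≤ u.length, r j ∈ F

/-- The infinite word `w` is accepted by the Büchi automaton `(Q, qI, δ, F)`. -/
def BuchiAccepts {Q A : Type*} (qI : Q) (δ : Q → A → Set Q) (F : Set Q) (w : ℕ → A) : Prop :=
  ∃ ρ : ℕ → Q, ρ 0 = qI ∧ (∀ n, ρ (n + 1) ∈ δ (ρ n) (w n)) ∧
    ∀ N : ℕ, ∃ n ≥ N, ρ n ∈ F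

/-- The `n`-th block `w(c n) w(c n + 1) ⋯ w(c (n+1) − 1)` of the infinite word `w`
with respect to the factorization `c`. -/
def wordBlock {A : Type*} (w : ℕ → A) (c : ℕ → ℕ) (n : ℕ) : List A :=
  (List.range (c (n + 1) - c n)).map (fun j => w (c n + j))

lemma wordBlock_length {A : Type*} (w : ℕ → A) (c : ℕ → ℕ) (n : ℕ) :
    (wordBlock w c n).length = c (n + 1) - c n := by
  simp [wordBlock]

lemma wordBlock_get {A : Type*} (w : ℕ → A) (c : ℕ → ℕ) (n j : ℕ)
    (hj : j < (wordBlock w c n).length) :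
    (wordBlock w c n).get ⟨j, hj⟩ = w (c n + j) := by
  simp [wordBlock]

lemma exists_block {c : ℕ → ℕ} (hc : StrictMono c) (hc0 : c 0 = 0) (m : ℕ) :
    ∃ k, c k ≤ m ∧ m < c (k + 1) := by
  have hex : ∃ k, m < c (k + 1) := ⟨m, lt_of_lt_of_le (Nat.lt_succ_self m) hc.le_apply⟩
  refine ⟨Nat.find hex, ?_, Nat.find_spec hex⟩
  cases h : Nat.find hex with
  | zero => rw [hc0]; exact Nat.zero_le m
  | succ k' =>
      have hk' : k' < Nat.find hex := by omega
      have := Nat.find_min hex hk'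
      exact le_of_not_gt this

lemma block_unique {c : ℕ → ℕ} (hc : StrictMono c) {m k l : ℕ}
    (h1 : c k ≤ m) (h2 : m < c (k + 1)) (h3 : c l ≤ m) (h4 : m < c (l + 1)) : k = l := by
  by_contra hne
  rcases lt_or_gt_of_ne hne with h | h
  · have := hc.monotone (show k + 1 ≤ l by omega)
    omega
  · have := hc.monotone (show l + 1 ≤ k by omega)
    omega

lemma buchi_block_iff {Q A : Type*} (qI : Q) (δ : Q → A → Set Q) (F : Set Q)
    (w : ℕ → A) (c : ℕ → ℕ) (hc : StrictMono c) (hc0 : c 0 = 0) :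
    BuchiAccepts qI δ F w ↔
      ∃ v : ℕ → Q, v 0 = qI ∧
        (∀ n, BuchiReaches δ (v n) (wordBlock w c n) (v (n + 1))) ∧
        ∀ N, ∃ n ≥ N, BuchiReachesAcc δ F (v n) (wordBlock w c n) (v (n + 1)) := by
  have hle : ∀ n, c n ≤ c (n + 1) := fun n => (hc (Nat.lt_succ_self n)).le
  constructor
  · rintro ⟨ρ, hρ0, hρt, hρF⟩
    refine ⟨fun n => ρ (c n), by simp [hc0, hρ0], ?_, ?_⟩
    · intro n
      refine ⟨fun j => ρ (c n + j), by simp, ?_, ?_⟩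
      · show ρ (c n + (wordBlock w c n).length) = ρ (c (n + 1))
        rw [wordBlock_length, Nat.add_sub_cancel' (hle n)]
      · intro j hj
        rw [wordBlock_get]
        exact hρt (c n + j)
    · intro N
      obtain ⟨m, hmN, hmF⟩ := hρF (c N)
      obtain ⟨k, hkm, hmk⟩ := exists_block hc hc0 m
      have hNk : N ≤ k := by
        by_contra h
        push_neg at h
        have := hc.monotone (show k + 1 ≤ N by omega)
        omega
      refine ⟨k, hNk, fun j => ρ (c k + j), by simp, ?_, ?_, ?_⟩
      · show ρ (c k + (wordBlock w c k).length) = ρ (c (k + 1))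
        rw [wordBlock_length, Nat.add_sub_cancel' (hle k)]
      · intro j hj; rw [wordBlock_get]; exact hρt (c k + j)
      · refine ⟨m - c k, ?_, ?_⟩
        · rw [wordBlock_length]; omega
        · show ρ (c k + (m - c k)) ∈ F
          rwa [Nat.add_sub_cancel' hkm]
  · rintro ⟨v, hv0, hreach, hacc⟩
    have hrun : ∀ n, ∃ r : ℕ → Q, r 0 = v n ∧ r (wordBlock w c n).length = v (n + 1) ∧
        (∀ j (hj : j < (wordBlock w c n).length),
          r (j + 1) ∈ δ (r j) ((wordBlock w c n).get ⟨j, hj⟩)) ∧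
        (BuchiReachesAcc δ F (v n) (wordBlock w c n) (v (n + 1)) →
          ∃ j ≤ (wordBlock w c n).length, r j ∈ F) := by
      intro n
      by_cases hP : BuchiReachesAcc δ F (v n) (wordBlock w c n) (v (n + 1))
      · obtain ⟨r, h1, h2, h3, h4⟩ := hP
        exact ⟨r, h1, h2, h3, fun _ => h4⟩
      · obtain ⟨r, h1, h2, h3⟩ := hreach n
        exact ⟨r, h1, h2, h3, fun h => absurd h hP⟩
    choose r hr0 hrlen hrt hrF using hrun
    choose idx hidxle hidxlt using fun m => exists_block hc hc0 m
    set ρ : ℕ → Q := fun m => r (idx m) (m - c (idx m)) with hρ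
    have key : ∀ n j, j ≤ (wordBlock w c n).length → ρ (c n + j) = r n j := by
      intro n j hj
      rw [wordBlock_length] at hj
      rcases lt_or_eq_of_le hj with h | h
      · have hn : idx (c n + j) = n :=
          block_unique hc (hidxle _) (hidxlt _) (Nat.le_add_right _ _) (by omega)
        show r (idx (c n + j)) (c n + j - c (idx (c n + j))) = r n j
        rw [hn, Nat.add_sub_cancel_left]
      · have hcn : c n + j = c (n + 1) := by have := hle n; omega
        have hn : idx (c n + j) = n + 1 :=
          block_unique hc (hidxle _) (hidxlt _) hcn.ge
            (by rw [hcn]; exact hc (Nat.lt_succ_self _))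
        show r (idx (c n + j)) (c n + j - c (idx (c n + j))) = r n j
        rw [hn, hcn, Nat.sub_self, hr0, ← hrlen n, wordBlock_length, h]
    refine ⟨ρ, ?_, ?_, ?_⟩
    · have h := key 0 0 (Nat.zero_le _)
      rw [hc0] at h
      simpa [hr0, hv0] using h
    · intro m
      have h1 := hidxle m
      have h2 := hidxlt m
      have hjlt : m - c (idx m) < (wordBlock w c (idx m)).length := by
        rw [wordBlock_length]; omega
      have e1 : ρ m = r (idx m) (m - c (idx m)) := rfl
      have e2 := key (idx m) (m - c (idx m) + 1) (by rw [wordBlock_length]; omega)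
      have hm1 : c (idx m) + (m - c (idx m) + 1) = m + 1 := by omega
      rw [hm1] at e2
      rw [e1, e2]
      have := hrt (idx m) (m - c (idx m)) hjlt
      rwa [wordBlock_get, Nat.add_sub_cancel' h1] at this
    · intro N
      obtain ⟨n, hnN, hP⟩ := hacc N
      obtain ⟨j, hj, hjF⟩ := hrF n hP
      refine ⟨c n + j, ?_, ?_⟩
      · calc N ≤ n := hnN
          _ ≤ c n := hc.le_apply
          _ ≤ c n + j := Nat.le_add_right _ _
      · rw [key n j hj]; exact hjF

/-- If the infinite words `w` and `w′` admit factorizations into blocks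
(via strictly monotone `c, c′` with `c 0 = c′ 0 = 0`) such that corresponding blocks
induce the same state transformations (both plain and with an accepting-state visit),
then `w` is accepted by the Büchi automaton iff `w′` is. -/
theorem buchi_accepts_of_blockwise_equiv {Q A : Type*} [Finite Q]
    (qI : Q) (δ : Q → A → Set Q) (F : Set Q)
    (w w' : ℕ → A) (c c' : ℕ → ℕ)
    (hc : StrictMono c) (hc' : StrictMono c') (hc0 : c 0 = 0) (hc0' : c' 0 = 0)
    (hblocks : ∀ n : ℕ, ∀ p q : Q,
      (BuchiReaches δ p (wordBlock w c n) q ↔ BuchiReaches δ p (wordBlock w' c' n) q) ∧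
      (BuchiReachesAcc δ F p (wordBlock w c n) q ↔
        BuchiReachesAcc δ F p (wordBlock w' c' n) q)) :
    BuchiAccepts qI δ F w ↔ BuchiAccepts qI δ F w' := by
  rw [buchi_block_iff qI δ F w c hc hc0, buchi_block_iff qI δ F w' c' hc' hc0']
  constructor
  · rintro ⟨v, h0, h1, h2⟩
    refine ⟨v, h0, fun n => (hblocks n _ _).1.mp (h1 n), fun N => ?_⟩
    obtain ⟨n, hn, h⟩ := h2 N
    exact ⟨n, hn, (hblocks n _ _).2.mp h⟩
  · rintro ⟨v, h0, h1, h2⟩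
    refine ⟨v, h0, fun n => (hblocks n _ _).1.mpr (h1 n), fun N => ?_⟩
    obtain ⟨n, hn, h⟩ := h2 N
    exact ⟨n, hn, (hblocks n _ _).2.mpr h⟩
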